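/- Under Assumption A, let k ∈ ℕ, λ > 0, ρ ∈ (0,1), M > 0, and x_k ∈ ℝ^d, and suppose ρ_λ := (10λ²L^{d/2}/l^{d/2+2}) exp(λ²M/(2l)) < 1 and ‖x_k − x*‖₂² ≤ ρ^k M. Then V[ψ_k]/(E[ψ_k])² ≤ (ρ_λ l²/(10λ²)) · ((L+λ)^d / (2^{d/2} λ^{d/2} L^{d/2})) · exp(λM/2). -/

import Mathlib

open MeasureTheory Real
open scoped RealInnerProductSpace

noncomputable section

variable {d : ℕ}
local notation "E" => EuclideanSpace ℝ (Fin d)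

lemma gauss_integral (b : ℝ) (hb : 0 < b) (c : E) :
    ∫ x : E, Real.exp (-(b * ‖x - c‖ ^ 2)) = (π / b) ^ ((d : ℝ) / 2) := by
  have h := integral_sub_right_eq_self (μ := (volume : Measure E))
    (fun x : E => Real.exp (-b * ‖x‖ ^ 2)) c
  simp only [neg_mul] at h ⊢
  rw [h]
  simp_rw [← neg_mul]
  rw [GaussianFourier.integral_rexp_neg_mul_sq_norm hb, finrank_euclideanSpace_fin]

lemma gauss_integrable (b : ℝ) (hb : 0 < b) (c : E) :
    Integrable (fun x : E => Real.exp (-(b * ‖x - c‖ ^ 2))) := by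
  have h0 : Integrable (fun v : E => Complex.exp (-(b:ℂ) * ‖v‖ ^ 2)) := by
    simpa using GaussianFourier.integrable_cexp_neg_mul_sq_norm_add
      (show (0:ℝ) < (b:ℂ).re from hb) 0 (0 : E)
  have h1 : Integrable (fun v : E => Real.exp (-(b * ‖v‖ ^ 2))) := by
    have := h0.re
    refine this.congr (Filter.Eventually.of_forall fun v => ?_)
    have : (-(b:ℂ) * (‖v‖:ℂ) ^ 2) = ((-(b * ‖v‖ ^ 2) : ℝ) : ℂ) := by push_cast; ring
    simp only [RCLike.re_to_complex]
    rw [this, ← Complex.ofReal_exp, Complex.ofReal_re]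
  exact h1.comp_sub_right c

lemma complete_square (a b : ℝ) (ha : 0 < a) (hb : 0 < b) (u v x : E) :
    a * ‖x - u‖ ^ 2 + b * ‖x - v‖ ^ 2 =
      (a + b) * ‖x - ((a / (a + b)) • u + (b / (a + b)) • v)‖ ^ 2 +
        (a * b / (a + b)) * ‖u - v‖ ^ 2 := by
  have hab : a + b ≠ 0 := by positivity
  have key : ∀ y z : E, ‖y - z‖ ^ 2 =
      (inner ℝ y y : ℝ) - 2 * (inner ℝ y z : ℝ) + (inner ℝ z z : ℝ) := by
    intro y z
    rw [norm_sub_sq_real, real_inner_self_eq_norm_sq, real_inner_self_eq_norm_sq]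
  simp only [key]
  simp only [inner_add_left, inner_add_right, real_inner_smul_left, real_inner_smul_right,
    real_inner_comm u x, real_inner_comm v x, real_inner_comm v u]
  field_simp
  ring


lemma rpow_combine (d : ℕ) (Q a b c : ℝ) (hQ : 0 < Q) (ha : 0 < a) (hb : 0 < b) (hc : 0 < c) :
    (Q / a) ^ ((d:ℝ)/2) / ((b / Q) ^ ((d:ℝ)/2) * ((Q / c) ^ ((d:ℝ)/2)) ^ 2)
      = c ^ (d:ℝ) / (a ^ ((d:ℝ)/2) * b ^ ((d:ℝ)/2)) := by
  have h1 : ((Q / c) ^ ((d:ℝ)/2)) ^ 2 = (Q / c * (Q / c)) ^ ((d:ℝ)/2) := by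
    rw [sq, ← Real.mul_rpow (by positivity) (by positivity)]
  rw [h1, ← Real.mul_rpow (by positivity) (by positivity),
    ← Real.div_rpow (by positivity) (by positivity)]
  have h2 : Q / a / (b / Q * (Q / c * (Q / c))) = c * c / (a * b) := by
    field_simp
  rw [h2]
  have h3 : (c * c / (a * b)) ^ ((d:ℝ)/2) = (c * c) ^ ((d:ℝ)/2) / (a * b) ^ ((d:ℝ)/2) :=
    Real.div_rpow (by positivity) (by positivity) _
  rw [h3, Real.mul_rpow ha.le hb.le]
  congr 1
  rw [show c * c = c ^ (2:ℝ) by rw [show (2:ℝ) = ((2:ℕ):ℝ) by norm_num, Real.rpow_natCast]; ring,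
    ← Real.rpow_mul hc.le]
  rw [show (2:ℝ) * ((d:ℝ)/2) = (d:ℝ) by ring]


lemma coef_nonneg (l L lam : ℝ) (hl : 0 < l) (hlam : 0 < lam) (hlL : l ≤ L) :
    0 ≤ lam * L / (L + lam) - lam * l / (2 * l + lam) := by
  have hL : 0 < L := lt_of_lt_of_le hl hlL
  have hge : lam * l / (2 * l + lam) ≤ lam * L / (L + lam) := by
    rw [div_le_div_iff₀ (by positivity) (by positivity)]
    nlinarith [mul_pos (mul_pos hlam hl) hL, mul_nonneg (mul_nonneg hlam.le hlam.le) (sub_nonneg.mpr hlL)]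
  linarith

lemma coef_bound (l L lam : ℝ) (hl : 0 < l) (hlam : 0 < lam) (hlL : l ≤ L) :
    lam * L / (L + lam) - lam * l / (2 * l + lam) ≤ (l * lam + lam ^ 2) / (2 * l) := by
  have hL : 0 < L := lt_of_lt_of_le hl hlL
  rw [div_sub_div _ _ (by positivity : (L + lam) ≠ 0) (by positivity : (2 * l + lam) ≠ 0),
    div_le_div_iff₀ (by positivity) (by positivity)]
  nlinarith [mul_pos hl hlam, mul_pos hL hlam, mul_pos (mul_pos hl hL) hlam,
    mul_pos (mul_pos hl hl) hlam, mul_pos (mul_pos hlam hlam) hlam,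
    mul_pos (mul_pos hl hlam) hlam, mul_pos (mul_pos hL hlam) hlam]

set_option maxHeartbeats 2000000 in
/-- Lemma 3.4, first bound: `V[ψ_k]/(E[ψ_k])²` is bounded. -/
theorem Vpsi_over_Epsi_sq_bound
    (d : ℕ) (hd : 1 ≤ d)
    (f : EuclideanSpace ℝ (Fin d) → ℝ) (hf : Measurable f)
    (xs : EuclideanSpace ℝ (Fin d)) (l L : ℝ) (hl : 0 < l) (hlL : l ≤ L)
    (hlow : ∀ x, f xs + l / 2 * ‖x - xs‖ ^ 2 ≤ f x)
    (hup : ∀ x, f x ≤ f xs + L / 2 * ‖x - xs‖ ^ 2)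
    (k : ℕ) (lam ρ M : ℝ) (hlam : 0 < lam) (hρ0 : 0 < ρ) (hρ1 : ρ < 1) (hM : 0 < M)
    (xk : EuclideanSpace ℝ (Fin d))
    (rl : ℝ)
    (hrl : rl = 10 * lam ^ 2 * L ^ ((d : ℝ) / 2) / l ^ ((d : ℝ) / 2 + 2) *
      Real.exp (lam ^ 2 * M / (2 * l)))
    (hrl1 : rl < 1)
    (hxk : ‖xk - xs‖ ^ 2 ≤ ρ ^ k * M)
    (Eψ Vψ : ℝ)
    (hEψ : Eψ = ((ρ ^ k)⁻¹ * lam / (2 * π)) ^ ((d : ℝ) / 2) *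
      ∫ x : EuclideanSpace ℝ (Fin d),
        Real.exp (-((ρ ^ k)⁻¹ * f x)) *
          Real.exp (-((ρ ^ k)⁻¹ * lam * ‖x - xk‖ ^ 2 / 2)))
    (hVψ : Vψ = ((ρ ^ k)⁻¹ * lam / (2 * π)) ^ ((d : ℝ) / 2) *
      (∫ x : EuclideanSpace ℝ (Fin d),
        (Real.exp (-((ρ ^ k)⁻¹ * f x))) ^ 2 *
          Real.exp (-((ρ ^ k)⁻¹ * lam * ‖x - xk‖ ^ 2 / 2))) - Eψ ^ 2) :
    Vψ / Eψ ^ 2 ≤ rl * l ^ 2 / (10 * lam ^ 2) *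
        ((L + lam) ^ (d : ℝ) /
          ((2 : ℝ) ^ ((d : ℝ) / 2) * lam ^ ((d : ℝ) / 2) * L ^ ((d : ℝ) / 2))) *
        Real.exp (lam * M / 2) := by
  have hπ : 0 < π := Real.pi_pos
  have hρk : 0 < ρ ^ k := pow_pos hρ0 k
  set β : ℝ := (ρ ^ k)⁻¹ with hβdef
  have hβ : 0 < β := inv_pos.mpr hρk
  set fs : ℝ := f xs with hfsdef
  set t : ℝ := ‖xk - xs‖ ^ 2 with htdef
  have ht0 : 0 ≤ t := sq_nonneg _
  have htM : β * t ≤ M := by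
    have : β * t ≤ β * (ρ ^ k * M) := by
      apply mul_le_mul_of_nonneg_left hxk hβ.le
    rwa [← mul_assoc, inv_mul_cancel₀ hρk.ne', one_mul] at this
  have hfs : ∀ x, fs ≤ f x := by
    intro x
    have := hlow x
    nlinarith [sq_nonneg ‖x - xs‖]
  set A : ℝ := (β * lam / (2 * π)) ^ ((d : ℝ) / 2) with hAdef
  have hA : 0 < A := Real.rpow_pos_of_pos (by positivity) _
  set I₁ : ℝ := ∫ x : EuclideanSpace ℝ (Fin d), Real.exp (-(β * f x)) * Real.exp (-(β * lam * ‖x - xk‖ ^ 2 / 2))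
    with hI₁def
  set I₂ : ℝ := ∫ x : EuclideanSpace ℝ (Fin d), (Real.exp (-(β * f x))) ^ 2 *
    Real.exp (-(β * lam * ‖x - xk‖ ^ 2 / 2)) with hI₂def
  -- integrability of the first integrand
  have hcont : Continuous fun x : EuclideanSpace ℝ (Fin d) => Real.exp (-(β * lam * ‖x - xk‖ ^ 2 / 2)) := by
    fun_prop
  have hint1 : Integrable (fun x : EuclideanSpace ℝ (Fin d) =>
      Real.exp (-(β * f x)) * Real.exp (-(β * lam * ‖x - xk‖ ^ 2 / 2))) := by
    refine Integrable.mono' (g := fun x : EuclideanSpace ℝ (Fin d) =>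
        Real.exp (-(β * fs)) * Real.exp (-(β * lam / 2 * ‖x - xk‖ ^ 2))) ?_ ?_ ?_
    · exact ((gauss_integrable (β * lam / 2) (by positivity) xk).const_mul _)
    · exact (((hf.const_mul β).neg.exp).mul hcont.measurable).aestronglyMeasurable
    · refine Filter.Eventually.of_forall fun x => ?_
      rw [Real.norm_eq_abs, abs_of_pos (by positivity)]
      have h1 : Real.exp (-(β * f x)) ≤ Real.exp (-(β * fs)) := by
        apply Real.exp_le_exp.mpr
        have := hfs x
        nlinarith
      have h2 : Real.exp (-(β * lam * ‖x - xk‖ ^ 2 / 2)) =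
          Real.exp (-(β * lam / 2 * ‖x - xk‖ ^ 2)) := by ring_nf
      rw [h2]
      exact mul_le_mul_of_nonneg_right h1 (Real.exp_pos _).le
  have hL : 0 < L := lt_of_lt_of_le hl hlL
  have hLlam : 0 < L + lam := by positivity
  have h2llam : 0 < 2 * l + lam := by positivity
  -- lower bound for I₁
  set w₁ : EuclideanSpace ℝ (Fin d) := (L / (L + lam)) • xs + (lam / (L + lam)) • xk with hw₁def
  have hcs₁ : ∀ x : EuclideanSpace ℝ (Fin d), L * ‖x - xs‖ ^ 2 + lam * ‖x - xk‖ ^ 2 =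
      (L + lam) * ‖x - w₁‖ ^ 2 + (L * lam / (L + lam)) * t := by
    intro x
    rw [htdef, norm_sub_rev xk xs]
    exact complete_square L lam hL hlam xs xk x
  set c₁ : ℝ := β / 2 * (L * lam / (L + lam)) with hc₁def
  set E₁ : ℝ := Real.exp (-(β * fs) - c₁ * t) * (2 * π / (β * (L + lam))) ^ ((d:ℝ)/2)
    with hE₁def
  have hE₁pos : 0 < E₁ := by positivity
  have hI₁low : E₁ ≤ I₁ := by
    have hgauss := gauss_integral (d := d) (β * (L + lam) / 2) (by positivity) w₁
    have hmono := integral_mono_of_nonneg (μ := (volume : Measure (EuclideanSpace ℝ (Fin d))))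
      (f := fun x => Real.exp (-(β * fs) - c₁ * t) *
        Real.exp (-(β * (L + lam) / 2 * ‖x - w₁‖ ^ 2)))
      (g := fun x => Real.exp (-(β * f x)) * Real.exp (-(β * lam * ‖x - xk‖ ^ 2 / 2)))
      (Filter.Eventually.of_forall fun x => by positivity) hint1
      (Filter.Eventually.of_forall fun x => by
        dsimp only
        rw [← Real.exp_add, ← Real.exp_add]
        apply Real.exp_le_exp.mpr
        have hx := hcs₁ x
        have hx2 : β / 2 * (L * ‖x - xs‖ ^ 2 + lam * ‖x - xk‖ ^ 2) =
            β / 2 * ((L + lam) * ‖x - w₁‖ ^ 2 + L * lam / (L + lam) * t) := by rw [hx]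
        have hu2 : β * f x ≤ β * (fs + L / 2 * ‖x - xs‖ ^ 2) :=
          mul_le_mul_of_nonneg_left (hup x) hβ.le
        have hct : c₁ * t = β / 2 * (L * lam / (L + lam) * t) := by rw [hc₁def]; ring
        linarith [hx2, hu2, hct])
    rw [integral_const_mul, hgauss] at hmono
    have hpi : π / (β * (L + lam) / 2) = 2 * π / (β * (L + lam)) := by
      field_simp
    rw [hpi] at hmono
    exact hmono
  -- upper bound for I₂
  set w₂ : EuclideanSpace ℝ (Fin d) := (2 * l / (2 * l + lam)) • xs + (lam / (2 * l + lam)) • xk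
    with hw₂def
  have hcs₂ : ∀ x : EuclideanSpace ℝ (Fin d), 2 * l * ‖x - xs‖ ^ 2 + lam * ‖x - xk‖ ^ 2 =
      (2 * l + lam) * ‖x - w₂‖ ^ 2 + (2 * l * lam / (2 * l + lam)) * t := by
    intro x
    rw [htdef, norm_sub_rev xk xs]
    exact complete_square (2 * l) lam (by positivity) hlam xs xk x
  set c₂ : ℝ := β / 2 * (2 * l * lam / (2 * l + lam)) with hc₂def
  set E₂ : ℝ := Real.exp (-(2 * (β * fs)) - c₂ * t) * (2 * π / (β * (2 * l + lam))) ^ ((d:ℝ)/2)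
    with hE₂def
  have hE₂pos : 0 < E₂ := by positivity
  have hI₂up : I₂ ≤ E₂ := by
    have hgauss := gauss_integral (d := d) (β * (2 * l + lam) / 2) (by positivity) w₂
    have hmono := integral_mono_of_nonneg (μ := (volume : Measure (EuclideanSpace ℝ (Fin d))))
      (f := fun x => (Real.exp (-(β * f x))) ^ 2 * Real.exp (-(β * lam * ‖x - xk‖ ^ 2 / 2)))
      (g := fun x => Real.exp (-(2 * (β * fs)) - c₂ * t) *
        Real.exp (-(β * (2 * l + lam) / 2 * ‖x - w₂‖ ^ 2)))
      (Filter.Eventually.of_forall fun x => by positivity)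
      ((gauss_integrable (β * (2 * l + lam) / 2) (by positivity) w₂).const_mul _)
      (Filter.Eventually.of_forall fun x => by
        dsimp only
        rw [sq, ← Real.exp_add, ← Real.exp_add, ← Real.exp_add]
        apply Real.exp_le_exp.mpr
        have hx2 : β / 2 * (2 * l * ‖x - xs‖ ^ 2 + lam * ‖x - xk‖ ^ 2) =
            β / 2 * ((2 * l + lam) * ‖x - w₂‖ ^ 2 + 2 * l * lam / (2 * l + lam) * t) := by
          rw [hcs₂ x]
        have hl2 : β * (fs + l / 2 * ‖x - xs‖ ^ 2) ≤ β * f x :=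
          mul_le_mul_of_nonneg_left (hlow x) hβ.le
        have hct : c₂ * t = β / 2 * (2 * l * lam / (2 * l + lam) * t) := by rw [hc₂def]; ring
        linarith [hx2, hl2, hct])
    rw [integral_const_mul, hgauss] at hmono
    have hpi : π / (β * (2 * l + lam) / 2) = 2 * π / (β * (2 * l + lam)) := by
      field_simp
    rw [hpi] at hmono
    exact hmono
  -- combine
  have hAE₁ : A * E₁ ≤ Eψ := by
    rw [hEψ]; exact mul_le_mul_of_nonneg_left hI₁low hA.le
  have hEψpos : 0 < Eψ := lt_of_lt_of_le (by positivity) hAE₁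
  have step1 : Vψ / Eψ ^ 2 ≤ A * I₂ / Eψ ^ 2 := by
    rw [hVψ]
    have h : A * I₂ - Eψ ^ 2 ≤ A * I₂ := by linarith [sq_nonneg Eψ]
    exact (div_le_div_iff_of_pos_right (by positivity)).mpr h
  have hA' : A ≠ 0 := hA.ne'
  have hE₁' : E₁ ≠ 0 := hE₁pos.ne'
  have step2 : A * I₂ / Eψ ^ 2 ≤ A * E₂ / (A * E₁) ^ 2 :=
    div_le_div₀ (by positivity) (mul_le_mul_of_nonneg_left hI₂up hA.le) (by positivity)
      (pow_le_pow_left₀ (by positivity) hAE₁ 2)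
  have step3 : A * E₂ / (A * E₁) ^ 2 = E₂ / (A * E₁ ^ 2) := by
    field_simp
  set Q : ℝ := 2 * π / β with hQdef
  have hQ : 0 < Q := by positivity
  have hfr1 : 2 * π / (β * (L + lam)) = Q / (L + lam) := by rw [hQdef]; field_simp
  have hfr2 : 2 * π / (β * (2 * l + lam)) = Q / (2 * l + lam) := by rw [hQdef]; field_simp
  have hfr3 : β * lam / (2 * π) = lam / Q := by rw [hQdef]; field_simp
  have hexp2 : Real.exp (-(β * fs) - c₁ * t) ^ 2 =
      Real.exp (-(2 * (β * fs)) - 2 * (c₁ * t)) := by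
    rw [sq, ← Real.exp_add]; ring_nf
  have hkey := rpow_combine d Q (2 * l + lam) lam (L + lam) hQ h2llam hlam hLlam
  have hid : E₂ / (A * E₁ ^ 2) = Real.exp ((2 * c₁ - c₂) * t) *
      ((L + lam) ^ (d:ℝ) / ((2 * l + lam) ^ ((d:ℝ)/2) * lam ^ ((d:ℝ)/2))) := by
    have c1 : E₂ / (A * E₁ ^ 2) =
        (Real.exp (-(2 * (β * fs)) - c₂ * t) / Real.exp (-(2 * (β * fs)) - 2 * (c₁ * t))) *
        ((Q / (2 * l + lam)) ^ ((d:ℝ)/2) /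
          ((lam / Q) ^ ((d:ℝ)/2) * ((Q / (L + lam)) ^ ((d:ℝ)/2)) ^ 2)) := by
      rw [hE₂def, hE₁def, hAdef, mul_pow, hexp2, hfr1, hfr2, hfr3]
      have p1 : (0:ℝ) < (Q / (2 * l + lam)) ^ ((d:ℝ)/2) := Real.rpow_pos_of_pos (by positivity) _
      have p2 : (0:ℝ) < (lam / Q) ^ ((d:ℝ)/2) := Real.rpow_pos_of_pos (by positivity) _
      have p3 : (0:ℝ) < (Q / (L + lam)) ^ ((d:ℝ)/2) := Real.rpow_pos_of_pos (by positivity) _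
      field_simp
    rw [c1, hkey, ← Real.exp_sub]
    congr 2
    ring
  have hexp_le : Real.exp ((2 * c₁ - c₂) * t) ≤
      Real.exp (lam * M / 2 + lam ^ 2 * M / (2 * l)) := by
    apply Real.exp_le_exp.mpr
    have heq : (2 * c₁ - c₂) * t =
        (lam * L / (L + lam) - lam * l / (2 * l + lam)) * (β * t) := by
      rw [hc₁def, hc₂def]; ring
    have hcoef : 0 ≤ lam * L / (L + lam) - lam * l / (2 * l + lam) :=
      coef_nonneg l L lam hl hlam hlL
    have hle2 : lam * L / (L + lam) - lam * l / (2 * l + lam) ≤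
        (l * lam + lam ^ 2) / (2 * l) := coef_bound l L lam hl hlam hlL
    calc (2 * c₁ - c₂) * t
        = (lam * L / (L + lam) - lam * l / (2 * l + lam)) * (β * t) := heq
      _ ≤ (lam * L / (L + lam) - lam * l / (2 * l + lam)) * M :=
          mul_le_mul_of_nonneg_left htM hcoef
      _ ≤ (l * lam + lam ^ 2) / (2 * l) * M := mul_le_mul_of_nonneg_right hle2 hM.le
      _ = lam * M / 2 + lam ^ 2 * M / (2 * l) := by field_simp
  have h2l : (2:ℝ) ^ ((d:ℝ)/2) * l ^ ((d:ℝ)/2) ≤ (2 * l + lam) ^ ((d:ℝ)/2) := by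
    rw [← Real.mul_rpow (by norm_num) hl.le]
    exact Real.rpow_le_rpow (by positivity) (by linarith) (by positivity)
  have hconst_le : (L + lam) ^ (d:ℝ) / ((2 * l + lam) ^ ((d:ℝ)/2) * lam ^ ((d:ℝ)/2)) ≤
      (L + lam) ^ (d:ℝ) / (2 ^ ((d:ℝ)/2) * l ^ ((d:ℝ)/2) * lam ^ ((d:ℝ)/2)) := by
    exact div_le_div_of_nonneg_left (by positivity) (by positivity)
      (mul_le_mul_of_nonneg_right h2l (Real.rpow_nonneg hlam.le _))
  have hRHSeq : rl * l ^ 2 / (10 * lam ^ 2) *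
      ((L + lam) ^ (d:ℝ) / (2 ^ ((d:ℝ)/2) * lam ^ ((d:ℝ)/2) * L ^ ((d:ℝ)/2))) *
      Real.exp (lam * M / 2)
      = Real.exp (lam * M / 2 + lam ^ 2 * M / (2 * l)) *
        ((L + lam) ^ (d:ℝ) / (2 ^ ((d:ℝ)/2) * l ^ ((d:ℝ)/2) * lam ^ ((d:ℝ)/2))) := by
    rw [hrl, Real.exp_add]
    have hl2 : l ^ ((d:ℝ)/2 + 2) = l ^ ((d:ℝ)/2) * l ^ 2 := by
      rw [Real.rpow_add hl, show (2:ℝ) = ((2:ℕ):ℝ) by norm_num, Real.rpow_natCast]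
    rw [hl2]
    have h1 : (0:ℝ) < L ^ ((d:ℝ)/2) := Real.rpow_pos_of_pos hL _
    have h2 : (0:ℝ) < l ^ ((d:ℝ)/2) := Real.rpow_pos_of_pos hl _
    have h3 : (0:ℝ) < lam ^ ((d:ℝ)/2) := Real.rpow_pos_of_pos hlam _
    have h4 : (0:ℝ) < (2:ℝ) ^ ((d:ℝ)/2) := Real.rpow_pos_of_pos two_pos _
    field_simp
  calc Vψ / Eψ ^ 2 ≤ A * I₂ / Eψ ^ 2 := step1
    _ ≤ A * E₂ / (A * E₁) ^ 2 := step2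
    _ = E₂ / (A * E₁ ^ 2) := step3
    _ = Real.exp ((2 * c₁ - c₂) * t) *
        ((L + lam) ^ (d:ℝ) / ((2 * l + lam) ^ ((d:ℝ)/2) * lam ^ ((d:ℝ)/2))) := hid
    _ ≤ Real.exp (lam * M / 2 + lam ^ 2 * M / (2 * l)) *
        ((L + lam) ^ (d:ℝ) / (2 ^ ((d:ℝ)/2) * l ^ ((d:ℝ)/2) * lam ^ ((d:ℝ)/2))) :=
          mul_le_mul hexp_le hconst_le (by positivity) (Real.exp_pos _).le
    _ = _ := hRHSeq.symm
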